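/- Let f be analytic near a real point ξ with f'(ξ) ≠ 0, and let a, b ∈ ℝ. Define G(w) := f'(ξ)²·f'(w)·(−2/(f(w)−f(ξ))² + a) − f''(w)·(2/(w−ξ)) − f'(w)·(−2/(w−ξ)² + b). Then lim_{w→ξ} G(w) = f'(ξ)·[ (1/2)(f''(ξ)/f'(ξ))² − (4/3)(f'''(ξ)/f'(ξ)) + f'(ξ)²·a − b ]. -/

import Mathlib

set_option maxHeartbeats 1000000

private lemma analyticAt_deriv' {f : ℂ → ℂ} {x : ℂ} (h : AnalyticAt ℂ f x) :
    AnalyticAt ℂ (deriv f) x := by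
  obtain ⟨s, hs, hmem⟩ := h.exists_mem_nhds_analyticOnNhd
  exact hmem.deriv x (mem_of_mem_nhds hs)

/-- Factor out `(w - ξ)` from an analytic function. -/
private lemma factor_analytic {f : ℂ → ℂ} {ξ : ℂ} (hf : AnalyticAt ℂ f ξ) :
    ∃ g : ℂ → ℂ, AnalyticAt ℂ g ξ ∧ g ξ = deriv f ξ ∧
      ∀ w, f w = f ξ + (w - ξ) * g w := by
  obtain ⟨p, hp⟩ := hf
  refine ⟨dslope f ξ, ⟨p.fslope, hp.has_fpower_series_dslope_fslope⟩,
    dslope_same f ξ, fun w => ?_⟩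
  have h := sub_smul_dslope f ξ w
  rw [smul_eq_mul] at h
  linear_combination -h

theorem key_limit_drift (f : ℂ → ℂ) (ξ : ℝ) (a b : ℝ)
    (hf : AnalyticAt ℂ f (ξ : ℂ)) (hf' : deriv f (ξ : ℂ) ≠ 0) :
    Filter.Tendsto (fun w : ℂ =>
        (deriv f (ξ : ℂ)) ^ 2 * deriv f w *
            (-2 / (f w - f (ξ : ℂ)) ^ 2 + (a : ℂ)) -
          deriv (deriv f) w * (2 / (w - (ξ : ℂ))) -
          deriv f w * (-2 / (w - (ξ : ℂ)) ^ 2 + (b : ℂ)))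
      (nhdsWithin (ξ : ℂ) {((ξ : ℂ))}ᶜ)
      (nhds (deriv f (ξ : ℂ) *
        ((1 / 2) * (deriv (deriv f) (ξ : ℂ) / deriv f (ξ : ℂ)) ^ 2 -
          (4 / 3) * (deriv (deriv (deriv f)) (ξ : ℂ) / deriv f (ξ : ℂ)) +
          (deriv f (ξ : ℂ)) ^ 2 * (a : ℂ) - (b : ℂ)))) := by
  set z : ℂ := (ξ : ℂ) with hz
  obtain ⟨g₁, hg₁, hg₁z, hfe⟩ := factor_analytic hf
  obtain ⟨g₂, hg₂, hg₂z, hg₁e⟩ := factor_analytic hg₁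
  set c₁ : ℂ := deriv f z with hc₁
  set R : ℂ → ℂ := g₂ with hR
  set S : ℂ → ℂ := deriv g₂ with hS
  set T : ℂ → ℂ := deriv (deriv g₂) with hT
  have hSa : AnalyticAt ℂ S z := analyticAt_deriv' hg₂
  have hTa : AnalyticAt ℂ T z := analyticAt_deriv' hSa
  -- global factorization
  have hfw : ∀ w, f w = f z + (w - z) * c₁ + (w - z) ^ 2 * R w := by
    intro w
    rw [hfe w, hg₁e w, hg₁z]
    ring
  -- first derivative, eventually
  have h2 : ∀ᶠ w in nhds z, deriv f w
      = c₁ + 2 * (w - z) * R w + (w - z) ^ 2 * S w := by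
    filter_upwards [hg₂.eventually_analyticAt] with w hw
    have hRd : HasDerivAt R (S w) w := hw.differentiableAt.hasDerivAt
    have hid : HasDerivAt (fun t : ℂ => t - z) 1 w := (hasDerivAt_id w).sub_const z
    have hsq : HasDerivAt (fun t : ℂ => (t - z) ^ 2) (2 * (w - z)) w := by
      simpa using hid.fun_pow 2
    have hD : HasDerivAt (fun t : ℂ => f z + (t - z) * c₁ + (t - z) ^ 2 * R t)
        (c₁ + 2 * (w - z) * R w + (w - z) ^ 2 * S w) w := by
      have := ((hid.mul_const c₁).const_add (f z)).fun_add (hsq.fun_mul hRd)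
      exact this.congr_deriv (by ring)
    have hfeq : f = fun t : ℂ => f z + (t - z) * c₁ + (t - z) ^ 2 * R t := funext hfw
    rw [hfeq]
    exact hD.deriv
  -- second derivative, eventually
  have h3 : ∀ᶠ w in nhds z, deriv (deriv f) w
      = 2 * R w + 4 * (w - z) * S w + (w - z) ^ 2 * T w := by
    filter_upwards [h2.eventually_nhds, hg₂.eventually_analyticAt] with w hw hwa
    have heq : deriv f =ᶠ[nhds w]
        fun t : ℂ => c₁ + 2 * (t - z) * R t + (t - z) ^ 2 * S t := hw
    rw [heq.deriv_eq]
    have hRd : HasDerivAt R (S w) w := hwa.differentiableAt.hasDerivAt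
    have hSd : HasDerivAt S (T w) w := (analyticAt_deriv' hwa).differentiableAt.hasDerivAt
    have hid : HasDerivAt (fun t : ℂ => t - z) 1 w := (hasDerivAt_id w).sub_const z
    have hsq : HasDerivAt (fun t : ℂ => (t - z) ^ 2) (2 * (w - z)) w := by
      simpa using hid.fun_pow 2
    have hD : HasDerivAt (fun t : ℂ => c₁ + 2 * (t - z) * R t + (t - z) ^ 2 * S t)
        (2 * R w + 4 * (w - z) * S w + (w - z) ^ 2 * T w) w := by
      have := ((((hid.const_mul (2:ℂ)).fun_mul hRd).const_add c₁)).fun_add (hsq.fun_mul hSd)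
      exact this.congr_deriv (by ring)
    exact hD.deriv
  -- values of higher derivatives at z
  have hd2 : deriv (deriv f) z = 2 * R z := by
    have := h3.self_of_nhds
    simpa using this
  have hd3 : deriv (deriv (deriv f)) z = 6 * S z := by
    have heq : deriv (deriv f) =ᶠ[nhds z]
        fun t : ℂ => 2 * R t + 4 * (t - z) * S t + (t - z) ^ 2 * T t := h3
    rw [heq.deriv_eq]
    have hRd : HasDerivAt R (S z) z := hg₂.differentiableAt.hasDerivAt
    have hSd : HasDerivAt S (T z) z := hSa.differentiableAt.hasDerivAt
    have hTd : HasDerivAt T (deriv T z) z := hTa.differentiableAt.hasDerivAt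
    have hid : HasDerivAt (fun t : ℂ => t - z) 1 z := (hasDerivAt_id z).sub_const z
    have hsq : HasDerivAt (fun t : ℂ => (t - z) ^ 2) (2 * (z - z)) z := by
      simpa using hid.fun_pow 2
    have hD : HasDerivAt (fun t : ℂ => 2 * R t + 4 * (t - z) * S t + (t - z) ^ 2 * T t)
        (6 * S z) z := by
      have := ((hRd.const_mul (2:ℂ)).fun_add (((hid.const_mul (4:ℂ)).fun_mul hSd))).fun_add
        (hsq.fun_mul hTd)
      exact this.congr_deriv (by ring)
    exact hD.deriv
  -- the continuous comparison function
  set Q : ℂ → ℂ := fun w => c₁ + (w - z) * R w with hQ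
  set F : ℂ → ℂ := fun w =>
    2 * (c₁ * (R w) ^ 2 + 2 * c₁ * (w - z) * R w * S w
        + (w - z) ^ 2 * (R w) ^ 2 * S w
        - 4 * S w * (Q w) ^ 2 - (w - z) * T w * (Q w) ^ 2) / (Q w) ^ 2
      + c₁ ^ 2 * (c₁ + 2 * (w - z) * R w + (w - z) ^ 2 * S w) * (a : ℂ)
      - (c₁ + 2 * (w - z) * R w + (w - z) ^ 2 * S w) * (b : ℂ) with hF
  have hRc : ContinuousAt R z := hg₂.continuousAt
  have hSc : ContinuousAt S z := hSa.continuousAt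
  have hTc : ContinuousAt T z := hTa.continuousAt
  have hidc : ContinuousAt (fun w : ℂ => w - z) z := (continuous_id.sub continuous_const).continuousAt
  have hQc : ContinuousAt Q z := continuousAt_const.add (hidc.mul hRc)
  have hQz : Q z = c₁ := by simp [hQ]
  have hFc : ContinuousAt F z := by
    rw [hF]
    have hnum : ContinuousAt (fun w : ℂ =>
        2 * (c₁ * (R w) ^ 2 + 2 * c₁ * (w - z) * R w * S w
          + (w - z) ^ 2 * (R w) ^ 2 * S w
          - 4 * S w * (Q w) ^ 2 - (w - z) * T w * (Q w) ^ 2)) z := by fun_prop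
    have hden : ContinuousAt (fun w : ℂ => (Q w) ^ 2) z := by fun_prop
    have hne : (Q z) ^ 2 ≠ 0 := by rw [hQz]; exact pow_ne_zero 2 hf'
    have hrest1 : ContinuousAt (fun w : ℂ =>
        c₁ ^ 2 * (c₁ + 2 * (w - z) * R w + (w - z) ^ 2 * S w) * (a : ℂ)) z := by fun_prop
    have hrest2 : ContinuousAt (fun w : ℂ =>
        (c₁ + 2 * (w - z) * R w + (w - z) ^ 2 * S w) * (b : ℂ)) z := by fun_prop
    exact ((hnum.div hden hne).add hrest1).sub hrest2
  -- value of F at z is the claimed limit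
  have hFz : F z = deriv f z *
      ((1 / 2) * (deriv (deriv f) z / deriv f z) ^ 2 -
        (4 / 3) * (deriv (deriv (deriv f)) z / deriv f z) +
        (deriv f z) ^ 2 * (a : ℂ) - (b : ℂ)) := by
    rw [hd2, hd3, ← hc₁]
    simp only [hF, hQ, sub_self, zero_mul, mul_zero, zero_add, add_zero,
      zero_pow, ne_eq, OfNat.ofNat_ne_zero, not_false_eq_true, mul_one]
    field_simp
    ring
  -- F tends to the limit along the punctured neighborhood
  have hFt : Filter.Tendsto F (nhdsWithin z {z}ᶜ) (nhds (F z)) :=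
    (hFc.continuousWithinAt).tendsto
  rw [← hFz]
  -- eventual equality of the original function with F on the punctured nbhd
  refine Filter.Tendsto.congr' ?_ hFt
  have hQne : ∀ᶠ w in nhds z, Q w ≠ 0 := by
    have : ContinuousAt Q z := hQc
    apply this.eventually_ne
    rw [hQz]; exact hf'
  have hmem : ∀ᶠ w in nhdsWithin z {z}ᶜ, w ≠ z := by
    filter_upwards [self_mem_nhdsWithin] with w hw
    simpa using hw
  filter_upwards [(h2.filter_mono nhdsWithin_le_nhds),
    (h3.filter_mono nhdsWithin_le_nhds),
    (hQne.filter_mono nhdsWithin_le_nhds), hmem] with w h2w h3w hQw hwz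
  have hu : w - z ≠ 0 := sub_ne_zero.mpr hwz
  have hfsub : f w - f z = (w - z) * Q w := by
    rw [hfw w, hQ]
    ring
  rw [hF]
  simp only
  rw [h2w, h3w, hfsub]
  field_simp
  ring
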